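/- Let (M, d) be a metric space and let γ₁, γ₂ be lines in M with γ₁ ∼ γ₂. Then for all x ∈ M one has b_{γ₁⁺}(x) = b_{γ₂⁺}(x) − b_{γ₂⁺}(γ₁(0)) and b_{γ₁⁻}(x) = b_{γ₂⁻}(x) − b_{γ₂⁻}(γ₁(0)). -/

import Mathlib

open Filter Topology

variable {M : Type*} [MetricSpace M]

/-- A ray in a metric space: a map `γ` defined (in effect) on `[0, ∞)` with
`d(γ s, γ t) = |s - t|` for all `s, t ≥ 0`. -/
def IsRay (γ : ℝ → M) : Prop :=
  ∀ s t : ℝ, 0 ≤ s → 0 ≤ t → dist (γ s) (γ t) = |s - t|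

/-- A line in a metric space: a map `γ : ℝ → M` with `d(γ s, γ t) = |s - t|`. -/
def IsLine (γ : ℝ → M) : Prop :=
  ∀ s t : ℝ, dist (γ s) (γ t) = |s - t|

/-- The Busemann function of a ray `γ`:
`b_γ(x) = lim_{t → ∞} (d(x, γ t) - t)`, which exists and equals the infimum
since `t ↦ d(x, γ t) - t` is nonincreasing on `[0, ∞)` and bounded below. -/
noncomputable def busemann (γ : ℝ → M) (x : M) : ℝ :=
  ⨅ t : Set.Ici (0 : ℝ), (dist x (γ t) - (t : ℝ))

/-- For a line `γ`, the negative ray `γ⁻(t) = γ(-t)`.  (The positive ray `γ⁺`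
is just `γ` itself, restricted to `[0, ∞)`.) -/
def negRay (γ : ℝ → M) : ℝ → M := fun t => γ (-t)

/-- The barrier function of a line `γ`: `B_γ = b_{γ⁺} + b_{γ⁻}`. -/
noncomputable def barrier (γ : ℝ → M) (x : M) : ℝ :=
  busemann γ x + busemann (negRay γ) x

/-- `γ' ≺ γ`: the barrier of `γ` vanishes at `γ' 0` and both Busemann functions
`b_{γ⁺}`, `b_{γ⁻}` calibrate `γ'` (every forward translate of `γ'` is a coray to
`γ⁺` and every backward translate is a coray to `γ⁻`). -/
def Prec (γ' γ : ℝ → M) : Prop :=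
  busemann γ (γ' 0) + busemann (negRay γ) (γ' 0) = 0 ∧
  ∀ t : ℝ, busemann γ (γ' t) = busemann γ (γ' 0) - t ∧
    busemann (negRay γ) (γ' t) = busemann (negRay γ) (γ' 0) + t

/-- A geodesic metric space: any two points are joined by a minimizing geodesic
segment. -/
def IsGeodesicSpace (M : Type*) [MetricSpace M] : Prop :=
  ∀ x y : M, ∃ σ : ℝ → M, σ 0 = x ∧ σ (dist x y) = y ∧
    ∀ s t : ℝ, s ∈ Set.Icc 0 (dist x y) → t ∈ Set.Icc 0 (dist x y) →
      dist (σ s) (σ t) = |s - t|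

/-- `γ'` is a coray to the ray `γ`: there are `tᵢ → ∞`, points `xᵢ → γ' 0` and
minimal geodesic segments `cᵢ` from `xᵢ` to `γ (tᵢ)` of length `Tᵢ = d(xᵢ, γ tᵢ) → ∞`
converging to `γ'` uniformly on compact subintervals of `[0, ∞)`. -/
def IsCoray (γ' γ : ℝ → M) : Prop :=
  ∃ (t : ℕ → ℝ) (x : ℕ → M) (c : ℕ → ℝ → M),
    (∀ i, 0 ≤ t i) ∧
    Tendsto t atTop atTop ∧
    Tendsto x atTop (𝓝 (γ' 0)) ∧
    (∀ i, c i 0 = x i) ∧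
    (∀ i, c i (dist (x i) (γ (t i))) = γ (t i)) ∧
    (∀ i, ∀ s s' : ℝ, s ∈ Set.Icc 0 (dist (x i) (γ (t i))) →
      s' ∈ Set.Icc 0 (dist (x i) (γ (t i))) → dist (c i s) (c i s') = |s - s'|) ∧
    Tendsto (fun i => dist (x i) (γ (t i))) atTop atTop ∧
    (∀ K > (0 : ℝ), ∀ ε > (0 : ℝ), ∃ N : ℕ, ∀ i ≥ N,
      ∀ s ∈ Set.Icc (0 : ℝ) K, dist (c i s) (γ' s) < ε)

/-- The line `γ` has the uniqueness property: through each point of the zero set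
of `B_γ` there is at most one line `γ''` with `γ'' ≺ γ`. -/
def HasUniqueCalibLine (γ : ℝ → M) : Prop :=
  ∀ x : M, barrier γ x = 0 →
    ∀ γ₁ γ₂ : ℝ → M, IsLine γ₁ → IsLine γ₂ → γ₁ 0 = x → γ₂ 0 = x →
      Prec γ₁ γ → Prec γ₂ γ → γ₁ = γ₂

lemma IsLine.isRay {γ : ℝ → M} (h : IsLine γ) : IsRay γ := fun s t _ _ => h s t

lemma IsLine.negRay_isRay {γ : ℝ → M} (h : IsLine γ) : IsRay (negRay γ) := by
  intro s t _ _
  simp only [negRay, h (-s) (-t)]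
  rw [abs_sub_comm]
  ring_nf

lemma busemann_bddBelow (γ : ℝ → M) (hγ : IsRay γ) (x : M) :
    BddBelow (Set.range fun t : Set.Ici (0 : ℝ) => dist x (γ t) - (t : ℝ)) := by
  refine ⟨-(dist x (γ 0)), ?_⟩
  rintro _ ⟨⟨t, ht⟩, rfl⟩
  have ht' : (0 : ℝ) ≤ t := ht
  have h0 : dist (γ 0) (γ t) = t := by
    rw [hγ 0 t le_rfl ht', abs_of_nonpos (by linarith)]; ring
  have htri := dist_triangle (γ 0) x (γ t)
  rw [dist_comm (γ 0) x] at htri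
  simp only []
  linarith [h0 ▸ htri]

lemma busemann_le (γ : ℝ → M) (hγ : IsRay γ) (x : M) {t : ℝ} (ht : 0 ≤ t) :
    busemann γ x ≤ dist x (γ t) - t :=
  ciInf_le (busemann_bddBelow γ hγ x) (⟨t, ht⟩ : Set.Ici (0 : ℝ))

lemma busemann_self_zero (γ : ℝ → M) (hγ : IsRay γ) : busemann γ (γ 0) = 0 := by
  have key : ∀ s : Set.Ici (0 : ℝ), dist (γ 0) (γ s) - (s : ℝ) = 0 := by
    rintro ⟨s, hs⟩
    have hs' : (0 : ℝ) ≤ s := hs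
    have : dist (γ 0) (γ s) = s := by
      rw [hγ 0 s le_rfl hs', abs_of_nonpos (by linarith)]; ring
    simp [this]
  rw [busemann]
  haveI : Nonempty (Set.Ici (0 : ℝ)) := ⟨⟨0, Set.self_mem_Ici⟩⟩
  simp only [key, ciInf_const]

/-- Key inequality: if `b_ρ` calibrates the ray `γ'` with value `A` at `γ' 0`,
then `b_ρ - A ≤ b_{γ'}` everywhere. -/
lemma key_inequality (γ' ρ : ℝ → M) (hγ' : IsRay γ') (hρ : IsRay ρ) (A : ℝ)
    (hcal : ∀ t : ℝ, 0 ≤ t → busemann ρ (γ' t) = A - t) (x : M) :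
    busemann ρ x - A ≤ busemann γ' x := by
  haveI : Nonempty (Set.Ici (0 : ℝ)) := ⟨⟨0, Set.self_mem_Ici⟩⟩
  conv_rhs => rw [busemann]
  rw [sub_le_iff_le_add, ciInf_add (busemann_bddBelow γ' hγ' x)]
  refine le_ciInf ?_
  rintro ⟨t, ht⟩
  have ht' : (0 : ℝ) ≤ t := ht
  -- b_ρ x ≤ b_ρ (γ' t) + dist x (γ' t) = A - t + dist x (γ' t)
  have hlip : busemann ρ x ≤ busemann ρ (γ' t) + dist x (γ' t) := by
    rw [← sub_le_iff_le_add]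
    conv_rhs => rw [busemann]
    refine le_ciInf ?_
    rintro ⟨s, hs⟩
    have hs' : (0 : ℝ) ≤ s := hs
    have h1 := busemann_le ρ hρ x hs'
    have h2 := dist_triangle x (γ' t) (ρ s)
    simp only []
    linarith
  rw [hcal t ht'] at hlip
  simp only []
  linarith

/-- if `γ₁ ∼ γ₂` then the Busemann functions of `γ₁` are obtained
from those of `γ₂` by subtracting their values at `γ₁ 0`. -/
theorem busemann_eq_of_sim (γ₁ γ₂ : ℝ → M) (h₁ : IsLine γ₁) (h₂ : IsLine γ₂)
    (hsim : Prec γ₁ γ₂ ∧ Prec γ₂ γ₁) :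
    ∀ x : M, busemann γ₁ x = busemann γ₂ x - busemann γ₂ (γ₁ 0) ∧
      busemann (negRay γ₁) x = busemann (negRay γ₂) x - busemann (negRay γ₂) (γ₁ 0) := by
  obtain ⟨⟨hA, hcal₁⟩, ⟨hB, hcal₂⟩⟩ := hsim
  set A := busemann γ₂ (γ₁ 0) with hAdef
  set A' := busemann (negRay γ₂) (γ₁ 0) with hA'def
  set B := busemann γ₁ (γ₂ 0) with hBdef
  set B' := busemann (negRay γ₁) (γ₂ 0) with hB'def
  -- calibration in the uniform "ray" form, for γ₁ and negRay γ₁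
  have cal1p : ∀ t : ℝ, 0 ≤ t → busemann γ₂ (γ₁ t) = A - t := fun t _ => (hcal₁ t).1
  have cal1n : ∀ t : ℝ, 0 ≤ t → busemann (negRay γ₂) (negRay γ₁ t) = A' - t := by
    intro t _
    have := (hcal₁ (-t)).2
    simpa [negRay, sub_eq_add_neg] using this
  have cal2p : ∀ t : ℝ, 0 ≤ t → busemann γ₁ (γ₂ t) = B - t := fun t _ => (hcal₂ t).1
  have cal2n : ∀ t : ℝ, 0 ≤ t → busemann (negRay γ₁) (negRay γ₂ t) = B' - t := by
    intro t _
    have := (hcal₂ (-t)).2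
    simpa [negRay, sub_eq_add_neg] using this
  have ineq1 : ∀ x : M, busemann γ₂ x - A ≤ busemann γ₁ x :=
    key_inequality γ₁ γ₂ h₁.isRay h₂.isRay A cal1p
  have ineq1' : ∀ x : M, busemann (negRay γ₂) x - A' ≤ busemann (negRay γ₁) x :=
    key_inequality (negRay γ₁) (negRay γ₂) h₁.negRay_isRay h₂.negRay_isRay A' cal1n
  have ineq2 : ∀ x : M, busemann γ₁ x - B ≤ busemann γ₂ x :=
    key_inequality γ₂ γ₁ h₂.isRay h₁.isRay B cal2p
  have ineq2' : ∀ x : M, busemann (negRay γ₁) x - B' ≤ busemann (negRay γ₂) x :=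
    key_inequality (negRay γ₂) (negRay γ₁) h₂.negRay_isRay h₁.negRay_isRay B' cal2n
  -- evaluate at γ₂ 0 to get B = -A, B' = -A'
  have e1 := ineq1 (γ₂ 0)
  have e1' := ineq1' (γ₂ 0)
  rw [busemann_self_zero γ₂ h₂.isRay] at e1
  have hne : negRay γ₂ 0 = γ₂ 0 := by simp [negRay]
  rw [show busemann (negRay γ₂) (γ₂ 0) = 0 from
    hne ▸ busemann_self_zero (negRay γ₂) h₂.negRay_isRay] at e1'
  have hBA : B = -A := by linarith
  have hB'A' : B' = -A' := by linarith
  intro x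
  constructor
  · have i1 := ineq1 x
    have i2 := ineq2 x
    linarith
  · have i1 := ineq1' x
    have i2 := ineq2' x
    linarith
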